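/- Every disconnected graph H without isolated vertices is edge-extendable: for every edge e ∈ E(H) there exists a graph U_H(e) such that (E.1) H is an induced subgraph of U_H(e), (E.2) U_H(e) − e has no induced subgraph isomorphic to H, and (E.3) for every edge f of U_H(e) other than e, U_H(e) − f contains an induced subgraph isomorphic to H. -/

import Mathlib

open SimpleGraph

/-- `G` is `H`-free: no induced subgraph of `G` is isomorphic to `H`. -/
def IsHFree {V W : Type*} (G : SimpleGraph V) (H : SimpleGraph W) : Prop :=
  ∀ s : Set V, IsEmpty ((G.induce s) ≃g H)

namespace Stmt6Aux

open Sum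

/-- `IsHFree` is invariant under isomorphism of the host graph. -/
lemma isHFree_of_iso {V₁ V₂ W : Type*} {G₁ : SimpleGraph V₁} {G₂ : SimpleGraph V₂}
    {H : SimpleGraph W} (θ : G₁ ≃g G₂) (h : IsHFree G₁ H) : IsHFree G₂ H := by
  intro s
  constructor
  intro ω
  have ξ : (G₁.induce (θ.toEquiv ⁻¹' s)) ≃g (G₂.induce s) :=
    { toEquiv := Equiv.subtypeEquiv θ.toEquiv (fun a => Iff.rfl)
      map_rel_iff' := by
        rintro ⟨a, ha⟩ ⟨b, hb⟩
        show G₂.Adj (θ a) (θ b) ↔ G₁.Adj a b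
        exact θ.map_rel_iff }
  exact (h _).false (ξ.trans ω)

/-- An isomorphism between graphs yields an isomorphism between single-edge deletions. -/
def isoDeleteEdges {V₁ V₂ : Type*} {G₁ : SimpleGraph V₁} {G₂ : SimpleGraph V₂}
    (θ : G₁ ≃g G₂) (f : Sym2 V₁) :
    (G₁.deleteEdges {f}) ≃g (G₂.deleteEdges {Sym2.map θ f}) where
  toEquiv := θ.toEquiv
  map_rel_iff' := by
    intro a b
    show (G₂.deleteEdges {Sym2.map ⇑θ f}).Adj (θ a) (θ b) ↔ (G₁.deleteEdges {f}).Adj a b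
    simp only [deleteEdges_adj, Set.mem_singleton_iff]
    have hinj : Function.Injective (Sym2.map ⇑θ) :=
      Sym2.map.injective (RelIso.injective θ)
    have hpair : s((θ a : V₂), θ b) = Sym2.map ⇑θ s(a, b) := (Sym2.map_pair_eq ⇑θ a b).symm
    rw [hpair, hinj.eq_iff, θ.map_rel_iff]

/-- If `H` embeds into `G` avoiding the edge `f`, then `G - f` is not `H`-free. -/
lemma not_isHFree_of_embedding {V₁ W : Type*} {G : SimpleGraph V₁} {H : SimpleGraph W}
    (θ : H ↪g G) (f : Sym2 V₁) (hav : ∀ a b : W, s(θ a, θ b) ≠ f) :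
    ¬ IsHFree (G.deleteEdges {f}) H := by
  intro h
  apply (h (Set.range ⇑θ)).false
  refine Iso.symm ⟨Equiv.ofInjective ⇑θ θ.injective, ?_⟩
  intro a b
  show ((G.deleteEdges {f}).Adj (θ a) (θ b)) ↔ H.Adj a b
  simp only [deleteEdges_adj, Set.mem_singleton_iff]
  constructor
  · rintro ⟨h1, -⟩
    exact θ.map_rel_iff.mp h1
  · intro hadj
    exact ⟨θ.map_rel_iff.mpr hadj, hav a b⟩

section Construction

variable {V : Type*} (H : SimpleGraph V) (x y : V)

/-- The extender graph on `V ⊕ V`. The left copy is a designated copy of `H`.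
On the right, the images of `x` and `y` are isolated; the rest of the right side is a
copy of `H - {x,y}`. The vertex `inl x` is joined to `inr v` iff `H.Adj x v` (so that
`{inl x, inl y} ∪ inr '' {x,y}ᶜ` also carries an induced copy of `H`), similarly for `y`,
and all other cross pairs (both underlying vertices outside `{x,y}`) are joined. -/
def U0 : SimpleGraph (V ⊕ V) where
  Adj a b :=
    match a, b with
    | inl a, inl b => H.Adj a b
    | inl a, inr b => (b ≠ x ∧ b ≠ y) ∧ ((a ≠ x ∧ a ≠ y) ∨ H.Adj a b)
    | inr a, inl b => (a ≠ x ∧ a ≠ y) ∧ ((b ≠ x ∧ b ≠ y) ∨ H.Adj b a)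
    | inr a, inr b => H.Adj a b ∧ (a ≠ x ∧ a ≠ y) ∧ (b ≠ x ∧ b ≠ y)
  symm := by
    constructor
    rintro (a | a) (b | b) h
    · exact h.symm
    · exact h
    · exact h
    · exact ⟨h.1.symm, h.2.2, h.2.1⟩
  loopless := by
    constructor
    rintro (a | a) h
    · exact H.irrefl h
    · exact H.irrefl h.1

variable {H x y}

lemma U0_adj_inl_inl {a b : V} : (U0 H x y).Adj (inl a) (inl b) ↔ H.Adj a b := Iff.rfl

lemma U0_adj_inl_inr {a b : V} :
    (U0 H x y).Adj (inl a) (inr b) ↔ (b ≠ x ∧ b ≠ y) ∧ ((a ≠ x ∧ a ≠ y) ∨ H.Adj a b) := Iff.rfl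

lemma U0_adj_inr_inl {a b : V} :
    (U0 H x y).Adj (inr a) (inl b) ↔ (a ≠ x ∧ a ≠ y) ∧ ((b ≠ x ∧ b ≠ y) ∨ H.Adj b a) := Iff.rfl

lemma U0_adj_inr_inr {a b : V} :
    (U0 H x y).Adj (inr a) (inr b) ↔ H.Adj a b ∧ (a ≠ x ∧ a ≠ y) ∧ (b ≠ x ∧ b ≠ y) := Iff.rfl

/-- The designated left copy of `H` in `U0`. -/
def emb1 : H ↪g U0 H x y where
  toFun := inl
  inj' := inl_injective
  map_rel_iff' := Iff.rfl

@[simp] lemma emb1_apply (v : V) : (emb1 (H := H) (x := x) (y := y)) v = inl v := rfl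

open scoped Classical in
/-- The second copy: `x, y` go to the left, everything else to the right. -/
noncomputable def c2 (x y : V) : V → V ⊕ V :=
  fun v => if v = x ∨ v = y then inl v else inr v

lemma c2_eq_inl {x y : V} {t c : V} (h : c2 x y t = inl c) : (c = x ∨ c = y) ∧ t = c := by
  unfold c2 at h
  split_ifs at h with ht
  cases h
  exact ⟨ht, rfl⟩

/-- The second induced copy of `H` in `U0`. -/
noncomputable def emb2 : H ↪g U0 H x y where
  toFun := c2 x y
  inj' := Function.LeftInverse.injective (g := Sum.elim id id)
    (by intro v; unfold c2; split_ifs <;> rfl)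
  map_rel_iff' := by
    intro a b
    show (U0 H x y).Adj (c2 x y a) (c2 x y b) ↔ H.Adj a b
    unfold c2
    split_ifs with ha hb hb
    · exact Iff.rfl
    · rw [U0_adj_inl_inr]
      push_neg at hb
      constructor
      · rintro ⟨-, (hc | h)⟩
        · exact absurd ha (by tauto)
        · exact h
      · intro h
        exact ⟨hb, Or.inr h⟩
    · rw [U0_adj_inr_inl]
      push_neg at ha
      constructor
      · rintro ⟨-, (hc | h)⟩
        · exact absurd hb (by tauto)
        · exact h.symm
      · intro h
        exact ⟨ha, Or.inr h.symm⟩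
    · rw [U0_adj_inr_inr]
      push_neg at ha hb
      constructor
      · exact fun h => h.1
      · intro h
        exact ⟨h, ha, hb⟩

@[simp] lemma emb2_apply (v : V) : (emb2 (H := H) (x := x) (y := y)) v = c2 x y v := rfl

lemma sym2_ne_e0_of_inr_right (p : V ⊕ V) (b : V) :
    s(p, (inr b : V ⊕ V)) ≠ s((inl x : V ⊕ V), inl y) := by
  intro h
  rw [Sym2.eq_iff] at h
  rcases h with ⟨-, h2⟩ | ⟨-, h2⟩ <;> contradiction

lemma sym2_ne_e0_of_inr_left (p : V ⊕ V) (b : V) :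
    s((inr b : V ⊕ V), p) ≠ s((inl x : V ⊕ V), inl y) := by
  rw [Sym2.eq_swap]
  exact sym2_ne_e0_of_inr_right p b

end Construction

section Main

variable {V : Type*} [Fintype V] {H : SimpleGraph V} {x y : V}

/-- Condition (E.2) for `U0`: deleting the designated edge leaves an `H`-free graph. -/
lemma free0 (hH : ¬ H.Connected) (hiso : ∀ v : V, ∃ w : V, H.Adj v w) (hxy : H.Adj x y) :
    IsHFree ((U0 H x y).deleteEdges {s((inl x : V ⊕ V), inl y)}) H := by
  classical
  intro s
  constructor
  intro ψ
  set U' := (U0 H x y).deleteEdges {s((inl x : V ⊕ V), inl y)} with hU'def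
  -- adjacency transfer along ψ
  have hadj : ∀ p q : ↥s, H.Adj (ψ p) (ψ q) ↔ U'.Adj ↑p ↑q := by
    intro p q
    rw [ψ.map_rel_iff]
    exact Iff.rfl
  -- every vertex of s has a neighbor within s
  have hnbr : ∀ p : ↥s, ∃ q : ↥s, U'.Adj ↑p ↑q := by
    intro p
    obtain ⟨w, hw⟩ := hiso (ψ p)
    refine ⟨ψ.symm w, ?_⟩
    rw [← hadj]
    rwa [ψ.apply_symm_apply]
  -- vertices inr x, inr y are isolated, hence not in s
  have hRxy : ∀ b : V, (inr b : V ⊕ V) ∈ s → b ≠ x ∧ b ≠ y := by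
    intro b hb
    by_contra hcon
    obtain ⟨q, hq⟩ := hnbr ⟨inr b, hb⟩
    have hq0 : (U0 H x y).Adj (inr b) ↑q := (deleteEdges_adj.mp hq).1
    obtain ⟨(c | c), hc⟩ := q
    · exact hcon (U0_adj_inr_inl.mp hq0).1
    · exact hcon (U0_adj_inr_inr.mp hq0).2.1
  by_cases hmix : (∃ u, (u ≠ x ∧ u ≠ y) ∧ (inl u : V ⊕ V) ∈ s) ∧ (∃ v, (inr v : V ⊕ V) ∈ s)
  · -- Mixed case: the induced graph is connected, contradicting disconnectedness of H.
    obtain ⟨⟨u, ⟨hux, huy⟩, hus⟩, v, hvs⟩ := hmix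
    obtain ⟨hvx, hvy⟩ := hRxy v hvs
    have hub : ↥s := ⟨inr v, hvs⟩
    have anc : ↥s := ⟨inl u, hus⟩
    -- basic adjacencies
    have adj_cross : ∀ (c : V), c ≠ x → c ≠ y → ∀ (d : V), d ≠ x → d ≠ y →
        U'.Adj (inl c) (inr d) := by
      intro c hcx hcy d hdx hdy
      rw [hU'def, deleteEdges_adj]
      exact ⟨U0_adj_inl_inr.mpr ⟨⟨hdx, hdy⟩, Or.inl ⟨hcx, hcy⟩⟩,
        by simpa using sym2_ne_e0_of_inr_right (x := x) (y := y) (inl c) d⟩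
    have reach : ∀ p : ↥s, (U'.induce s).Reachable p ⟨inr v, hvs⟩ := by
      have hia : ∀ p q : ↥s, U'.Adj ↑p ↑q → (U'.induce s).Adj p q := fun _ _ h => h
      -- first: any inl c with c ∉ {x,y} and any inr c reaches the hub
      have reach_good : ∀ (p : ↥s), (∀ c, ↑p = (inl c : V ⊕ V) → c ≠ x ∧ c ≠ y) →
          (U'.induce s).Reachable p ⟨inr v, hvs⟩ := by
        rintro ⟨(c | c), hc⟩ hgood
        · exact (hia _ _ (adj_cross c (hgood c rfl).1 (hgood c rfl).2 v hvx hvy)).reachable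
        · -- inr c: go through the anchor inl u
          obtain ⟨hcx, hcy⟩ := hRxy c hc
          have h1 : U'.Adj (inr c) (inl u) := by
            rw [hU'def, deleteEdges_adj]
            exact ⟨U0_adj_inr_inl.mpr ⟨⟨hcx, hcy⟩, Or.inl ⟨hux, huy⟩⟩,
              by simpa using sym2_ne_e0_of_inr_left (x := x) (y := y) (inl u) c⟩
          have h2 : U'.Adj (inl u) (inr v) := adj_cross u hux huy v hvx hvy
          exact ((hia ⟨inr c, hc⟩ ⟨inl u, hus⟩ h1).reachable).trans
            ((hia ⟨inl u, hus⟩ ⟨inr v, hvs⟩ h2).reachable)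
      rintro ⟨(c | c), hc⟩
      · by_cases hcg : c ≠ x ∧ c ≠ y
        · exact reach_good ⟨inl c, hc⟩ (by rintro d hd; cases hd; exact hcg)
        · -- c ∈ {x, y}: pass through a neighbor first
          obtain ⟨q, hq⟩ := hnbr ⟨inl c, hc⟩
          have hq0 : (U0 H x y).Adj (inl c) ↑q := (deleteEdges_adj.mp hq).1
          have hqne : ¬ s((inl c : V ⊕ V), ↑q) = s((inl x : V ⊕ V), inl y) := by
            simpa using (deleteEdges_adj.mp hq).2
          have hqgood : ∀ d, ↑q = (inl d : V ⊕ V) → d ≠ x ∧ d ≠ y := by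
            intro d hd
            rw [not_and_or] at hcg
            push_neg at hcg
            have hAdj : H.Adj c d := by
              rw [hd] at hq0
              exact U0_adj_inl_inl.mp hq0
            constructor
            · intro hdx
              subst hdx
              rcases hcg with rfl | rfl
              · exact H.irrefl hAdj
              · apply hqne
                rw [hd, Sym2.eq_swap]
            · intro hdy
              subst hdy
              rcases hcg with rfl | rfl
              · apply hqne
                rw [hd]
              · exact H.irrefl hAdj
          exact ((hia ⟨inl c, hc⟩ q hq).reachable).trans (reach_good q hqgood)
      · exact reach_good ⟨inr c, hc⟩ (by rintro d hd; cases hd)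
    have hpre : H.Preconnected := by
      intro a b
      have hr : (U'.induce s).Reachable (ψ.symm a) (ψ.symm b) :=
        (reach (ψ.symm a)).trans (reach (ψ.symm b)).symm
      have h2 : H.Reachable (ψ (ψ.symm a)) (ψ (ψ.symm b)) := Iso.reachable_iff.mpr hr
      rwa [RelIso.apply_symm_apply, RelIso.apply_symm_apply] at h2
    haveI : Nonempty V := ⟨x⟩
    exact hH ⟨hpre⟩
  · -- Unmixed case: the induced copy is isomorphic to `H - e`, contradiction by edge count.
    haveI : Fintype ↥s := Fintype.ofFinite ↥s
    have hforce : ∀ a, (inl a : V ⊕ V) ∈ s → (∃ b, (inr b : V ⊕ V) ∈ s) → (a = x ∨ a = y) := by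
      intro a ha hb
      by_contra hcon
      push_neg at hcon
      exact hmix ⟨⟨a, hcon, ha⟩, hb⟩
    set ρ : ↥s → V := fun p => Sum.elim id id ↑p with hρ
    have hinj : Function.Injective ρ := by
      rintro ⟨(a | a), ha⟩ ⟨(b | b), hb⟩ hab <;> simp only [hρ, Sum.elim_inl, Sum.elim_inr,
        id_eq] at hab
      · exact Subtype.ext (congrArg Sum.inl hab)
      · subst hab
        rcases hforce a ha ⟨a, hb⟩ with rfl | rfl
        · exact absurd rfl (hRxy _ hb).1
        · exact absurd rfl (hRxy _ hb).2
      · subst hab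
        rcases hforce a hb ⟨a, ha⟩ with rfl | rfl
        · exact absurd rfl (hRxy _ ha).1
        · exact absurd rfl (hRxy _ ha).2
      · exact Subtype.ext (congrArg Sum.inr hab)
    have hcard : Fintype.card ↥s = Fintype.card V := Fintype.card_congr ψ.toEquiv
    have hbij : Function.Bijective ρ := (Fintype.bijective_iff_injective_and_card ρ).mpr
      ⟨hinj, hcard⟩
    have hmapiff : ∀ p q : ↥s,
        (H.deleteEdges {s(x, y)}).Adj (Equiv.ofBijective ρ hbij p) (Equiv.ofBijective ρ hbij q) ↔
          (U'.induce s).Adj p q := by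
      rintro ⟨(a | a), ha⟩ ⟨(b | b), hb⟩ <;>
        simp only [Equiv.ofBijective_apply, hρ, Sum.elim_inl, Sum.elim_inr, id_eq,
          comap_adj, Function.Embedding.coe_subtype, hU'def, deleteEdges_adj,
          Set.mem_singleton_iff]
      · -- inl a, inl b
        rw [U0_adj_inl_inl]
        constructor
        · rintro ⟨h1, h2⟩
          refine ⟨h1, fun hc => h2 ?_⟩
          simp only [Sym2.eq_iff, Sum.inl.injEq] at hc
          rcases hc with ⟨rfl, rfl⟩ | ⟨rfl, rfl⟩
          · rfl
          · exact Sym2.eq_swap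
        · rintro ⟨h1, h2⟩
          refine ⟨h1, fun hc => h2 ?_⟩
          rw [Sym2.eq_iff] at hc
          rcases hc with ⟨rfl, rfl⟩ | ⟨rfl, rfl⟩
          · rfl
          · exact Sym2.eq_swap
      · -- inl a, inr b
        rw [U0_adj_inl_inr]
        obtain ⟨hbx, hby⟩ := hRxy b hb
        constructor
        · rintro ⟨h1, -⟩
          exact ⟨⟨⟨hbx, hby⟩, Or.inr h1⟩,
            by simpa using sym2_ne_e0_of_inr_right (x := x) (y := y) (inl a) b⟩
        · rintro ⟨⟨-, (hc | h)⟩, -⟩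
          · rcases hforce a ha ⟨b, hb⟩ with rfl | rfl
            · exact absurd rfl hc.1
            · exact absurd rfl hc.2
          · refine ⟨h, fun hc => ?_⟩
            rw [Sym2.eq_iff] at hc
            rcases hc with ⟨-, h4⟩ | ⟨-, h4⟩
            · exact hby h4
            · exact hbx h4
      · -- inr a, inl b
        rw [U0_adj_inr_inl]
        obtain ⟨hax, hay⟩ := hRxy a ha
        constructor
        · rintro ⟨h1, -⟩
          exact ⟨⟨⟨hax, hay⟩, Or.inr h1.symm⟩,
            by simpa using sym2_ne_e0_of_inr_left (x := x) (y := y) (inl b) a⟩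
        · rintro ⟨⟨-, (hc | h)⟩, -⟩
          · rcases hforce b hb ⟨a, ha⟩ with rfl | rfl
            · exact absurd rfl hc.1
            · exact absurd rfl hc.2
          · refine ⟨h.symm, fun hc => ?_⟩
            rw [Sym2.eq_iff] at hc
            rcases hc with ⟨h3, -⟩ | ⟨h3, -⟩
            · exact hax h3
            · exact hay h3
      · -- inr a, inr b
        rw [U0_adj_inr_inr]
        obtain ⟨hax, hay⟩ := hRxy a ha
        obtain ⟨hbx, hby⟩ := hRxy b hb
        constructor
        · rintro ⟨h1, -⟩
          exact ⟨⟨h1, ⟨hax, hay⟩, hbx, hby⟩,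
            by simpa using sym2_ne_e0_of_inr_right (x := x) (y := y) (inr a) b⟩
        · rintro ⟨⟨h1, -⟩, -⟩
          refine ⟨h1, fun hc => ?_⟩
          rw [Sym2.eq_iff] at hc
          rcases hc with ⟨h3, -⟩ | ⟨h3, -⟩
          · exact hax h3
          · exact hay h3
    have χ : (U'.induce s) ≃g (H.deleteEdges {s(x, y)}) :=
      { toEquiv := Equiv.ofBijective ρ hbij
        map_rel_iff' := fun {p q} => hmapiff p q }
    have hiso2 : H ≃g (H.deleteEdges {s(x, y)}) := χ.comp ψ.symm
    haveI : Fintype (H.edgeSet) := Fintype.ofFinite _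
    haveI : Fintype ((H.deleteEdges {s(x, y)}).edgeSet) := Fintype.ofFinite _
    have hc := hiso2.card_edgeFinset_eq
    have hdel : (H.deleteEdges {s(x, y)}).edgeFinset = H.edgeFinset.erase s(x, y) := by
      ext z
      simp only [mem_edgeFinset, edgeSet_deleteEdges, Set.mem_diff, Set.mem_singleton_iff,
        Finset.mem_erase]
      tauto
    have hmem : s(x, y) ∈ H.edgeFinset := by
      rw [mem_edgeFinset]
      exact hxy
    rw [hdel, Finset.card_erase_of_mem hmem] at hc
    have hpos : 0 < H.edgeFinset.card := Finset.card_pos.mpr ⟨s(x, y), hmem⟩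
    omega

/-- Condition (E.3) for `U0`: deleting any other edge leaves an induced copy of `H`. -/
lemma e3_0 (hxy : H.Adj x y) :
    ∀ f ∈ (U0 H x y).edgeSet, f ≠ s((inl x : V ⊕ V), inl y) →
      ¬ IsHFree ((U0 H x y).deleteEdges {f}) H := by
  intro f
  induction f using Sym2.ind with
  | _ w₁ w₂ =>
    intro hf hne
    rw [mem_edgeSet] at hf
    obtain (a | a) := w₁ <;> obtain (b | b) := w₂
    · -- inl a, inl b : use the second copy
      have hab : H.Adj a b := U0_adj_inl_inl.mp hf
      apply not_isHFree_of_embedding (emb2 (H := H) (x := x) (y := y))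
      intro u v hc
      simp only [emb2_apply] at hc
      rw [Sym2.eq_iff] at hc
      have key : ∀ (t₁ t₂ : V), c2 x y t₁ = inl a → c2 x y t₂ = inl b → False := by
        intro t₁ t₂ h1 h2
        obtain ⟨haxy, -⟩ := c2_eq_inl h1
        obtain ⟨hbxy, -⟩ := c2_eq_inl h2
        apply hne
        rcases haxy with h1' | h1' <;> rcases hbxy with h2' | h2' <;>
            rw [h1', h2'] at hab ⊢ <;>
          first
            | rfl
            | exact Sym2.eq_swap
            | exact absurd hab H.irrefl
      rcases hc with ⟨h1, h2⟩ | ⟨h1, h2⟩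
      · exact key u v h1 h2
      · exact key v u h2 h1
    · -- inl a, inr b : use the first copy
      apply not_isHFree_of_embedding (emb1 (H := H) (x := x) (y := y))
      intro u v hc
      simp only [emb1_apply] at hc
      rw [Sym2.eq_iff] at hc
      rcases hc with ⟨-, h2⟩ | ⟨h1, -⟩ <;> contradiction
    · apply not_isHFree_of_embedding (emb1 (H := H) (x := x) (y := y))
      intro u v hc
      simp only [emb1_apply] at hc
      rw [Sym2.eq_iff] at hc
      rcases hc with ⟨h1, -⟩ | ⟨-, h2⟩ <;> contradiction
    · apply not_isHFree_of_embedding (emb1 (H := H) (x := x) (y := y))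
      intro u v hc
      simp only [emb1_apply] at hc
      rw [Sym2.eq_iff] at hc
      rcases hc with ⟨h1, -⟩ | ⟨h1, -⟩ <;> contradiction

end Main

end Stmt6Aux

/-- Every disconnected graph `H` without isolated vertices is edge-extendable:
for every edge `xy` of `H` there is a graph `U` together with an induced copy `φ` of `H`
in `U` (condition (E.1)) such that deleting the edge `φ(x)φ(y)` from `U` leaves an
`H`-free graph (E.2), while deleting any other edge of `U` leaves an induced copy
of `H` (E.3). -/
theorem stmt6 {V : Type*} [Fintype V] (H : SimpleGraph V) (hH : ¬ H.Connected)
    (hiso : ∀ v : V, ∃ w : V, H.Adj v w) :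
    ∀ x y : V, H.Adj x y →
      ∃ (n : ℕ) (U : SimpleGraph (Fin n)) (φ : H ↪g U),
        IsHFree (U.deleteEdges {s(φ x, φ y)}) H ∧
        ∀ f ∈ U.edgeSet, f ≠ s(φ x, φ y) → ¬ IsHFree (U.deleteEdges {f}) H := by
  classical
  intro x y hxy
  let κ : (V ⊕ V) ≃ Fin (Fintype.card (V ⊕ V)) := Fintype.equivFin (V ⊕ V)
  let U : SimpleGraph (Fin (Fintype.card (V ⊕ V))) := (Stmt6Aux.U0 H x y).comap ⇑κ.symm
  let ι : (Stmt6Aux.U0 H x y) ≃g U :=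
    { toEquiv := κ
      map_rel_iff' := by
        intro a b
        show (Stmt6Aux.U0 H x y).Adj (κ.symm (κ a)) (κ.symm (κ b)) ↔ _
        rw [Equiv.symm_apply_apply, Equiv.symm_apply_apply] }
  let φ : H ↪g U := ι.toEmbedding.comp (Stmt6Aux.emb1 (H := H) (x := x) (y := y))
  have hφx : φ x = κ (Sum.inl x) := rfl
  have hφy : φ y = κ (Sum.inl y) := rfl
  have hmape : Sym2.map ⇑ι s((Sum.inl x : V ⊕ V), Sum.inl y) = s(φ x, φ y) := by
    rw [Sym2.map_pair_eq]
    rfl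
  refine ⟨Fintype.card (V ⊕ V), U, φ, ?_, ?_⟩
  · -- (E.2)
    have h0 := Stmt6Aux.free0 (x := x) (y := y) hH hiso hxy
    have h1 := Stmt6Aux.isHFree_of_iso
      (Stmt6Aux.isoDeleteEdges ι s((Sum.inl x : V ⊕ V), Sum.inl y)) h0
    rwa [hmape] at h1
  · -- (E.3)
    intro f hf hne
    revert hf hne
    induction f using Sym2.ind with
    | _ i j =>
      intro hf hne
      rw [mem_edgeSet] at hf
      have hf0 : s(κ.symm i, κ.symm j) ∈ (Stmt6Aux.U0 H x y).edgeSet := hf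
      have hne0 : s(κ.symm i, κ.symm j) ≠ s((Sum.inl x : V ⊕ V), Sum.inl y) := by
        intro hcon
        apply hne
        have := congrArg (Sym2.map ⇑κ) hcon
        rw [Sym2.map_pair_eq, Sym2.map_pair_eq, Equiv.apply_symm_apply,
          Equiv.apply_symm_apply] at this
        rw [this, hφx, hφy]
      have hnot := Stmt6Aux.e3_0 (x := x) (y := y) hxy _ hf0 hne0
      intro hfree
      apply hnot
      have hiso3 := Stmt6Aux.isoDeleteEdges ι s((κ.symm i : V ⊕ V), κ.symm j)
      have heq : Sym2.map ⇑ι s((κ.symm i : V ⊕ V), κ.symm j) = s(i, j) := by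
        show Sym2.map ⇑κ _ = _
        rw [Sym2.map_pair_eq, Equiv.apply_symm_apply, Equiv.apply_symm_apply]
      rw [heq] at hiso3
      exact Stmt6Aux.isHFree_of_iso hiso3.symm hfree
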